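/- Equivalence of unbalanced relaxations: for ρ_0, ρ_1 ∈ H_+ and α > 0, V_1(ρ_0,ρ_1) = inf{ ‖u‖_* + α‖v‖_* : ρ_0 − ρ_1 = ∇_L*(u) + v } equals V̂_1(ρ_0,ρ_1) = inf{ ‖u‖_* + α‖ρ_0 − μ‖_* + α‖ρ_1 − ν‖_* : μ, ν ∈ H_+, tr(μ) = tr(ν), μ − ν = ∇_L*(u) }. -/

import Mathlib

open Matrix
open scoped ComplexOrder


noncomputable def nuclearNorm {m k : Type*} [Fintype m] [Fintype k] [DecidableEq k]
    (A : Matrix m k ℂ) : ℝ :=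
  ∑ i, Real.sqrt ((Matrix.isHermitian_conjTranspose_mul_self A).eigenvalues i)

namespace Aux

variable {m : ℕ} {v : Matrix (Fin m) (Fin m) ℂ} (hv : v.IsHermitian)

lemma star_mul_self_eigU (hA : v.IsHermitian) :
    star (hA.eigenvectorUnitary : Matrix (Fin m) (Fin m) ℂ) * (hA.eigenvectorUnitary : Matrix (Fin m) (Fin m) ℂ) = 1 :=
  Unitary.star_mul_self_of_mem (SetLike.coe_mem _)

lemma mul_star_self_eigU (hA : v.IsHermitian) :
    (hA.eigenvectorUnitary : Matrix (Fin m) (Fin m) ℂ) * star (hA.eigenvectorUnitary : Matrix (Fin m) (Fin m) ℂ) = 1 :=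
  Unitary.mul_star_self_of_mem (SetLike.coe_mem _)

lemma cfc_mul (f g : ℝ → ℝ) : hv.cfc f * hv.cfc g = hv.cfc (fun x => f x * g x) := by
  have key : ∀ a b c d e f : Matrix (Fin m) (Fin m) ℂ,
      (a * b * c) * (d * e * f) = a * (b * (c * d) * e) * f := by
    intros; simp only [mul_assoc]
  simp only [Matrix.IsHermitian.cfc, Unitary.conjStarAlgAut_apply, Unitary.coe_star, key, star_mul_self_eigU, mul_one,
    diagonal_mul_diagonal]
  congr 2
  ext i j
  simp only [Matrix.add_apply, Matrix.sub_apply, Matrix.diagonal_apply, Function.comp_apply]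
  split_ifs <;> push_cast <;> ring

lemma cfc_add (f g : ℝ → ℝ) : hv.cfc f + hv.cfc g = hv.cfc (fun x => f x + g x) := by
  simp only [Matrix.IsHermitian.cfc, Unitary.conjStarAlgAut_apply, Unitary.coe_star, ← add_mul, ← mul_add]
  congr 2
  ext i j
  simp only [Matrix.add_apply, Matrix.sub_apply, Matrix.diagonal_apply, Function.comp_apply]
  split_ifs <;> push_cast <;> ring

lemma cfc_sub (f g : ℝ → ℝ) : hv.cfc f - hv.cfc g = hv.cfc (fun x => f x - g x) := by
  simp only [Matrix.IsHermitian.cfc, Unitary.conjStarAlgAut_apply, Unitary.coe_star, ← sub_mul, ← mul_sub]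
  congr 2
  ext i j
  simp only [Matrix.add_apply, Matrix.sub_apply, Matrix.diagonal_apply, Function.comp_apply]
  split_ifs <;> push_cast <;> ring

lemma cfc_id : hv.cfc (fun x => x) = v := by
  conv_rhs => rw [hv.spectral_theorem]
  rfl

lemma cfc_one : hv.cfc (fun _ => 1) = 1 := by
  have : (diagonal (RCLike.ofReal ∘ (fun _ : ℝ => (1:ℝ)) ∘ hv.eigenvalues) : Matrix (Fin m) (Fin m) ℂ) = 1 := by
    simp [Function.comp_def]
  rw [Matrix.IsHermitian.cfc, Unitary.conjStarAlgAut_apply, this, mul_one, mul_star_self_eigU]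

lemma cfc_posSemidef {f : ℝ → ℝ} (hf : ∀ x, 0 ≤ f x) : (hv.cfc f).PosSemidef := by
  rw [Matrix.IsHermitian.cfc, Unitary.conjStarAlgAut_apply, star_eq_conjTranspose]
  refine PosSemidef.mul_mul_conjTranspose_same ?_ _
  refine posSemidef_diagonal_iff.mpr fun i => ?_
  exact RCLike.ofReal_nonneg.mpr (hf _)

lemma trace_cfc (f : ℝ → ℝ) :
    Matrix.trace (hv.cfc f) = ((∑ i, f (hv.eigenvalues i) : ℝ) : ℂ) := by
  rw [Matrix.IsHermitian.cfc, Unitary.conjStarAlgAut_apply, Matrix.trace_mul_cycle, star_mul_self_eigU,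
    one_mul, Matrix.trace_diagonal]
  push_cast
  rfl

noncomputable def _root_.Matrix.PosSemidef.sqrt {A : Matrix (Fin m) (Fin m) ℂ} (hA : A.PosSemidef) :
    Matrix (Fin m) (Fin m) ℂ := hA.1.cfc Real.sqrt

lemma _root_.Matrix.PosSemidef.sqrt_mul_self {A : Matrix (Fin m) (Fin m) ℂ} (hA : A.PosSemidef) :
    hA.sqrt * hA.sqrt = A := by
  rw [Matrix.PosSemidef.sqrt, cfc_mul]
  conv_rhs => rw [← cfc_id hA.1]
  unfold Matrix.IsHermitian.cfc
  congr 2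
  funext i
  simp only [Function.comp_apply, Real.mul_self_sqrt (hA.eigenvalues_nonneg i)]

lemma _root_.Matrix.PosSemidef.posSemidef_sqrt {A : Matrix (Fin m) (Fin m) ℂ} (hA : A.PosSemidef) :
    hA.sqrt.PosSemidef :=
  cfc_posSemidef hA.1 Real.sqrt_nonneg

open scoped MatrixOrder in
lemma _root_.Matrix.PosSemidef.eq_sqrt_of_sq_eq {A B : Matrix (Fin m) (Fin m) ℂ}
    (hA : A.PosSemidef) (hB : B.PosSemidef) (h : A ^ 2 = B) : A = hB.sqrt := by
  have h1 : CFC.sqrt B = A :=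
    (CFC.sqrt_eq_iff B A hB.nonneg hA.nonneg).mpr (by rw [← pow_two, h])
  have h2 : CFC.sqrt B = hB.sqrt := by
    rw [CFC.sqrt_eq_real_sqrt B hB.nonneg, cfcₙ_eq_cfc, Matrix.IsHermitian.cfc_eq hB.1]
    rfl
  rw [← h1, h2]

lemma nuclearNorm_nonneg {m k : Type*} [Fintype m] [Fintype k] [DecidableEq k]
    (A : Matrix m k ℂ) : 0 ≤ nuclearNorm A :=
  Finset.sum_nonneg fun _ _ => Real.sqrt_nonneg _

lemma eig_congr {m : ℕ} {A B : Matrix (Fin m) (Fin m) ℂ} (h : A = B)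
    (hA : A.IsHermitian) (hB : B.IsHermitian) : hA.eigenvalues = hB.eigenvalues := by
  subst h; rfl

lemma eig_congr' {k : Type*} [Fintype k] [DecidableEq k] {A B : Matrix k k ℂ} (h : A = B)
    (hA : A.IsHermitian) (hB : B.IsHermitian) : hA.eigenvalues = hB.eigenvalues := by
  subst h; rfl

lemma nuclearNorm_neg {m k : Type*} [Fintype m] [Fintype k] [DecidableEq k]
    (A : Matrix m k ℂ) : nuclearNorm (-A) = nuclearNorm A := by
  have h : (-A)ᴴ * (-A) = Aᴴ * A := by simp
  simp only [nuclearNorm,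
    eig_congr' h (Matrix.isHermitian_conjTranspose_mul_self (-A)) (Matrix.isHermitian_conjTranspose_mul_self A)]

lemma psd_trace_re_nonneg {m : ℕ} {A : Matrix (Fin m) (Fin m) ℂ} (hA : A.PosSemidef) :
    0 ≤ (Matrix.trace A).re := by
  rw [Matrix.trace]
  rw [Complex.re_sum]
  refine Finset.sum_nonneg fun i _ => ?_
  have := hA.re_dotProduct_nonneg (Pi.single i 1)
  simpa [dotProduct, Matrix.mulVec_single, Pi.single_apply, Matrix.diag] using this

lemma trace_mul_re_nonneg {m : ℕ} {A B : Matrix (Fin m) (Fin m) ℂ}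
    (hA : A.PosSemidef) (hB : B.PosSemidef) : 0 ≤ (Matrix.trace (A * B)).re := by
  have h1 : A * B = hA.sqrt * (hA.sqrt * B) := by
    rw [← mul_assoc, hA.sqrt_mul_self]
  rw [h1, Matrix.trace_mul_comm]
  have h2 : (hA.sqrt * B * hA.sqrt).PosSemidef := by
    have := hB.conjTranspose_mul_mul_same hA.sqrt
    rwa [hA.posSemidef_sqrt.1.eq] at this
  exact psd_trace_re_nonneg h2

lemma nuclearNorm_eq_of_sq {m : ℕ} {A P : Matrix (Fin m) (Fin m) ℂ}
    (hP : P.PosSemidef) (h : Aᴴ * A = P * P) :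
    nuclearNorm A = (Matrix.trace P).re := by
  have hM : (Aᴴ * A).PosSemidef := Matrix.posSemidef_conjTranspose_mul_self A
  have hPe : P = hM.sqrt := hP.eq_sqrt_of_sq_eq hM (by rw [pow_two, ← h])
  have htr : Matrix.trace hM.sqrt
      = ((∑ i, Real.sqrt (hM.1.eigenvalues i) : ℝ) : ℂ) := by
    have : hM.sqrt = hM.1.cfc Real.sqrt := rfl
    rw [this, trace_cfc]
  rw [hPe, htr]
  unfold nuclearNorm
  rw [Complex.ofReal_re]


lemma nuclearNorm_psd {m : ℕ} {P : Matrix (Fin m) (Fin m) ℂ} (hP : P.PosSemidef) :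
    nuclearNorm P = (Matrix.trace P).re :=
  nuclearNorm_eq_of_sq hP (by rw [hP.1.eq])

lemma nuclearNorm_hermitian {m : ℕ} {v : Matrix (Fin m) (Fin m) ℂ} (hv : v.IsHermitian) :
    nuclearNorm v = ∑ i, |hv.eigenvalues i| := by
  have hP : (hv.cfc (fun x => |x|)).PosSemidef := cfc_posSemidef hv (fun x => abs_nonneg x)
  have hsq : vᴴ * v = hv.cfc (fun x => |x|) * hv.cfc (fun x => |x|) := by
    rw [cfc_mul, hv.eq]
    have : (fun x : ℝ => |x| * |x|) = fun x => x * x := by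
      funext x; exact abs_mul_abs_self x
    rw [this, ← cfc_mul hv (fun x => x) (fun x => x), cfc_id]
  rw [nuclearNorm_eq_of_sq hP hsq, trace_cfc, Complex.ofReal_re]

/-- Positive and negative parts of a Hermitian matrix. -/
lemma exists_parts {m : ℕ} {v : Matrix (Fin m) (Fin m) ℂ} (hv : v.IsHermitian) :
    ∃ P Q : Matrix (Fin m) (Fin m) ℂ, P.PosSemidef ∧ Q.PosSemidef ∧ v = P - Q ∧
      nuclearNorm v = nuclearNorm P + nuclearNorm Q ∧
      nuclearNorm P = (Matrix.trace P).re ∧ nuclearNorm Q = (Matrix.trace Q).re := by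
  refine ⟨hv.cfc (fun x => max x 0), hv.cfc (fun x => max (-x) 0),
    cfc_posSemidef hv (fun x => le_max_right _ _),
    cfc_posSemidef hv (fun x => le_max_right _ _), ?_, ?_, ?_, ?_⟩
  · rw [cfc_sub]
    have : (fun x : ℝ => max x 0 - max (-x) 0) = fun x => x := by
      funext x
      rcases le_total 0 x with h | h
      · rw [max_eq_left h, max_eq_right (by linarith), sub_zero]
      · rw [max_eq_right h, max_eq_left (by linarith)]; ring
    rw [this, cfc_id]
  · have hP := cfc_posSemidef hv (fun x : ℝ => le_max_right x 0)
    have hQ := cfc_posSemidef hv (fun x : ℝ => le_max_right (-x) 0)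
    rw [nuclearNorm_psd hP, nuclearNorm_psd hQ, nuclearNorm_hermitian hv,
      trace_cfc, trace_cfc, Complex.ofReal_re, Complex.ofReal_re, ← Finset.sum_add_distrib]
    congr 1; funext i
    rcases le_total 0 (hv.eigenvalues i) with h | h
    · rw [abs_of_nonneg h, max_eq_left h, max_eq_right (by linarith), add_zero]
    · rw [abs_of_nonpos h, max_eq_right h, max_eq_left (by linarith)]; ring
  · exact nuclearNorm_psd (cfc_posSemidef hv (fun x => le_max_right _ _))
  · exact nuclearNorm_psd (cfc_posSemidef hv (fun x => le_max_right _ _))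

/-- Key inequality: if Hermitian `v = P - Q` with `P Q` PSD then `‖v‖₁ ≤ tr P + tr Q`. -/
lemma nuclearNorm_le_traces {m : ℕ} {v P Q : Matrix (Fin m) (Fin m) ℂ}
    (hv : v.IsHermitian) (hP : P.PosSemidef) (hQ : Q.PosSemidef) (h : v = P - Q) :
    nuclearNorm v ≤ (Matrix.trace P).re + (Matrix.trace Q).re := by
  set s : ℝ → ℝ := fun x => if 0 ≤ x then 1 else -1 with hs
  set W := hv.cfc s with hW
  have hWv : W * v = hv.cfc (fun x => |x|) := by
    have h1 : hv.cfc s * hv.cfc (fun x => x) = hv.cfc (fun x => s x * x) := cfc_mul hv _ _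
    rw [cfc_id] at h1
    have hfun : (fun x : ℝ => s x * x) = fun x : ℝ => |x| := by
      funext x
      rcases le_or_gt 0 x with hx | hx
      · simp [hs, hx, abs_of_nonneg hx]
      · simp [hs, not_le.mpr hx, abs_of_neg hx]
    rw [hW, h1, hfun]
  have hnv : nuclearNorm v = (Matrix.trace (W * v)).re := by
    rw [hWv, trace_cfc, Complex.ofReal_re, nuclearNorm_hermitian hv]
  have honeW : (1 - W).PosSemidef := by
    rw [hW, ← cfc_one hv, cfc_sub]
    refine cfc_posSemidef hv fun x => ?_
    rcases le_or_gt 0 x with hx | hx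
    · simp [hs, hx]
    · norm_num [hs, not_le.mpr hx]
  have honeW' : (1 + W).PosSemidef := by
    rw [hW, ← cfc_one hv, cfc_add]
    refine cfc_posSemidef hv fun x => ?_
    rcases le_or_gt 0 x with hx | hx
    · simp [hs, hx]
    · norm_num [hs, not_le.mpr hx]
  have h1 : 0 ≤ (Matrix.trace ((1 - W) * P)).re := trace_mul_re_nonneg honeW hP
  have h2 : 0 ≤ (Matrix.trace ((1 + W) * Q)).re := trace_mul_re_nonneg honeW' hQ
  rw [sub_mul, one_mul, Matrix.trace_sub, Complex.sub_re] at h1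
  rw [add_mul, one_mul, Matrix.trace_add, Complex.add_re] at h2
  have hsplit : (Matrix.trace (W * v)).re
      = (Matrix.trace (W * P)).re - (Matrix.trace (W * Q)).re := by
    rw [h, mul_sub, Matrix.trace_sub, Complex.sub_re]
  rw [hnv, hsplit]
  linarith

lemma nuclearNorm_sub_le {m : ℕ} {A B : Matrix (Fin m) (Fin m) ℂ}
    (hA : A.IsHermitian) (hB : B.IsHermitian) :
    nuclearNorm (A - B) ≤ nuclearNorm A + nuclearNorm B := by
  obtain ⟨P₁, Q₁, hP₁, hQ₁, hd₁, hn₁, hnP₁, hnQ₁⟩ := exists_parts hA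
  obtain ⟨P₂, Q₂, hP₂, hQ₂, hd₂, hn₂, hnP₂, hnQ₂⟩ := exists_parts hB
  have hdec : A - B = (P₁ + Q₂) - (Q₁ + P₂) := by rw [hd₁, hd₂]; abel
  have := nuclearNorm_le_traces (hA.sub hB) (hP₁.add hQ₂) (hQ₁.add hP₂) hdec
  rw [Matrix.trace_add, Matrix.trace_add, Complex.add_re, Complex.add_re] at this
  rw [hn₁, hn₂, hnP₁, hnQ₁, hnP₂, hnQ₂]
  linarith

end Aux

noncomputable def opNorm {m k : Type*} [Fintype m] [Fintype k] [DecidableEq k]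
    (A : Matrix m k ℂ) : ℝ :=
  ‖LinearMap.toContinuousLinearMap (Matrix.toEuclideanLin A)‖

noncomputable def stack {N m : ℕ} (u : Fin N → Matrix (Fin m) (Fin m) ℂ) :
    Matrix (Fin N × Fin m) (Fin m) ℂ :=
  Matrix.of fun p j => u p.1 p.2 j

noncomputable def grad {N n : ℕ} (L : Fin N → Matrix (Fin n) (Fin n) ℂ)
    (X : Matrix (Fin n) (Fin n) ℂ) : Fin N → Matrix (Fin n) (Fin n) ℂ :=
  fun k => L k * X - X * L k

noncomputable def divg {N n : ℕ} (L Y : Fin N → Matrix (Fin n) (Fin n) ℂ) :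
    Matrix (Fin n) (Fin n) ℂ :=
  ∑ k, (L k * Y k - Y k * L k)

noncomputable def V1 {N n : ℕ} (L : Fin N → Matrix (Fin n) (Fin n) ℂ) (α : ℝ)
    (ρ₀ ρ₁ : Matrix (Fin n) (Fin n) ℂ) : ℝ :=
  sInf {x : ℝ | ∃ (u : Fin N → Matrix (Fin n) (Fin n) ℂ) (v : Matrix (Fin n) (Fin n) ℂ),
    (∀ k, (u k)ᴴ = -(u k)) ∧ v.IsHermitian ∧ ρ₀ - ρ₁ = divg L u + v ∧
    x = nuclearNorm (stack u) + α * nuclearNorm v}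

noncomputable def hatV1 {N n : ℕ} (L : Fin N → Matrix (Fin n) (Fin n) ℂ) (α : ℝ)
    (ρ₀ ρ₁ : Matrix (Fin n) (Fin n) ℂ) : ℝ :=
  sInf {x : ℝ | ∃ (u : Fin N → Matrix (Fin n) (Fin n) ℂ)
      (μ ν : Matrix (Fin n) (Fin n) ℂ),
    (∀ k, (u k)ᴴ = -(u k)) ∧ μ.PosSemidef ∧ ν.PosSemidef ∧
    Matrix.trace μ = Matrix.trace ν ∧ μ - ν = divg L u ∧
    x = nuclearNorm (stack u) + α * nuclearNorm (ρ₀ - μ) + α * nuclearNorm (ρ₁ - ν)}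

lemma trace_divg {N n : ℕ} (L u : Fin N → Matrix (Fin n) (Fin n) ℂ) :
    Matrix.trace (divg L u) = 0 := by
  unfold divg
  rw [Matrix.trace_sum]
  refine Finset.sum_eq_zero fun k _ => ?_
  rw [Matrix.trace_sub, Matrix.trace_mul_comm, sub_self]

theorem V1_eq_hatV1 {N n : ℕ}
    (L : Fin N → Matrix (Fin n) (Fin n) ℂ) (hL : ∀ k, (L k).IsHermitian)
    (α : ℝ) (hα : 0 < α)
    (ρ₀ ρ₁ : Matrix (Fin n) (Fin n) ℂ)
    (h₀ : ρ₀.PosSemidef) (h₁ : ρ₁.PosSemidef) :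
    V1 L α ρ₀ ρ₁ = hatV1 L α ρ₀ ρ₁ := by
  unfold V1 hatV1
  have hdivg0 : divg L (0 : Fin N → Matrix (Fin n) (Fin n) ℂ) = 0 := by
    simp [divg]
  have hbdd1 : BddBelow {x : ℝ | ∃ (u : Fin N → Matrix (Fin n) (Fin n) ℂ)
      (v : Matrix (Fin n) (Fin n) ℂ),
      (∀ k, (u k)ᴴ = -(u k)) ∧ v.IsHermitian ∧ ρ₀ - ρ₁ = divg L u + v ∧
      x = nuclearNorm (stack u) + α * nuclearNorm v} := by
    refine ⟨0, fun x hx => ?_⟩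
    obtain ⟨u, v, -, -, -, rfl⟩ := hx
    exact add_nonneg (Aux.nuclearNorm_nonneg _) (mul_nonneg hα.le (Aux.nuclearNorm_nonneg _))
  have hbdd2 : BddBelow {x : ℝ | ∃ (u : Fin N → Matrix (Fin n) (Fin n) ℂ)
      (μ ν : Matrix (Fin n) (Fin n) ℂ),
      (∀ k, (u k)ᴴ = -(u k)) ∧ μ.PosSemidef ∧ ν.PosSemidef ∧
      Matrix.trace μ = Matrix.trace ν ∧ μ - ν = divg L u ∧
      x = nuclearNorm (stack u) + α * nuclearNorm (ρ₀ - μ) + α * nuclearNorm (ρ₁ - ν)} := by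
    refine ⟨0, fun x hx => ?_⟩
    obtain ⟨u, μ, ν, -, -, -, -, -, rfl⟩ := hx
    have := Aux.nuclearNorm_nonneg (stack u)
    have := Aux.nuclearNorm_nonneg (ρ₀ - μ)
    have := Aux.nuclearNorm_nonneg (ρ₁ - ν)
    nlinarith
  have hne1 : Set.Nonempty {x : ℝ | ∃ (u : Fin N → Matrix (Fin n) (Fin n) ℂ)
      (v : Matrix (Fin n) (Fin n) ℂ),
      (∀ k, (u k)ᴴ = -(u k)) ∧ v.IsHermitian ∧ ρ₀ - ρ₁ = divg L u + v ∧
      x = nuclearNorm (stack u) + α * nuclearNorm v} := by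
    refine ⟨_, 0, ρ₀ - ρ₁, fun k => by simp, h₀.1.sub h₁.1, by rw [hdivg0, zero_add], rfl⟩
  have hne2 : Set.Nonempty {x : ℝ | ∃ (u : Fin N → Matrix (Fin n) (Fin n) ℂ)
      (μ ν : Matrix (Fin n) (Fin n) ℂ),
      (∀ k, (u k)ᴴ = -(u k)) ∧ μ.PosSemidef ∧ ν.PosSemidef ∧
      Matrix.trace μ = Matrix.trace ν ∧ μ - ν = divg L u ∧
      x = nuclearNorm (stack u) + α * nuclearNorm (ρ₀ - μ) + α * nuclearNorm (ρ₁ - ν)} := by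
    exact ⟨_, 0, 0, 0, fun k => by simp, Matrix.PosSemidef.zero, Matrix.PosSemidef.zero,
      rfl, by rw [hdivg0, sub_zero], rfl⟩
  refine le_antisymm (le_csInf hne2 ?_) (le_csInf hne1 ?_)
  · rintro x ⟨u, μ, ν, hu, hμ, hν, htr, hdiv, rfl⟩
    have hherm1 : (ρ₀ - μ).IsHermitian := h₀.1.sub hμ.1
    have hherm2 : (ρ₁ - ν).IsHermitian := h₁.1.sub hν.1
    refine csInf_le_of_le hbdd1
      (b := nuclearNorm (stack u) + α * nuclearNorm ((ρ₀ - μ) - (ρ₁ - ν)))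
      ⟨u, (ρ₀ - μ) - (ρ₁ - ν), hu, hherm1.sub hherm2, by rw [← hdiv]; abel, rfl⟩ ?_
    have tri := Aux.nuclearNorm_sub_le hherm1 hherm2
    have := mul_le_mul_of_nonneg_left tri hα.le
    linarith [mul_add α (nuclearNorm (ρ₀ - μ)) (nuclearNorm (ρ₁ - ν))]
  · rintro x ⟨u, v, hu, hv, hsum, rfl⟩
    obtain ⟨P, Q, hPp, hQp, hdec, hnorm, -, -⟩ := Aux.exists_parts hv
    have hdiv' : (ρ₀ + Q) - (ρ₁ + P) = divg L u := by
      have h1 : (ρ₀ + Q) - (ρ₁ + P) = (ρ₀ - ρ₁) - v := by rw [hdec]; abel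
      rw [h1, hsum]; abel
    have htr' : Matrix.trace (ρ₀ + Q) = Matrix.trace (ρ₁ + P) := by
      have h0 := congrArg Matrix.trace hdiv'
      rw [Matrix.trace_sub, trace_divg] at h0
      exact sub_eq_zero.mp h0
    refine csInf_le_of_le hbdd2
      ⟨u, ρ₀ + Q, ρ₁ + P, hu, h₀.add hQp, h₁.add hPp, htr', hdiv', rfl⟩ (le_of_eq ?_)
    have e1 : ρ₀ - (ρ₀ + Q) = -Q := by abel
    have e2 : ρ₁ - (ρ₁ + P) = -P := by abel
    rw [e1, e2, Aux.nuclearNorm_neg, Aux.nuclearNorm_neg, hnorm]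
    ring
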